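/- arXiv:2605.06228 — 2 statements merged into one kernel-verified Lean document; each statement's English description precedes it below -/
import Mathlib

section
/- If f : ℝ^n → ℝ is C¹ with L-Lipschitz gradient, then the gradient of the Gaussian smoothing converges to the true gradient in the vanishing-smoothing limit, with the quantitative bound ‖∇f_σ(x) − ∇f(x)‖₂ ≤ Lσ√n for every x, so that ∇f_σ(x) → ∇f(x) as σ → 0. -/
open MeasureTheory ProbabilityTheory Real Set

section aux

lemma gaussianReal_std_eq' :
    gaussianReal 0 1 = volume.withDensity
      (fun x => (((√(2*π))⁻¹ * rexp (-x^2/2)).toNNReal : ENNReal)) := by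
  rw [gaussianReal_of_var_ne_zero _ one_ne_zero]
  congr 1
  ext x
  rw [gaussianPDF_def, gaussianPDFReal_def]
  rw [show ENNReal.ofReal = fun r => ((r.toNNReal : ENNReal)) from rfl]
  norm_num

lemma integral_gaussianReal_std' (g : ℝ → ℝ) :
    ∫ x, g x ∂(gaussianReal 0 1) = ∫ x, ((√(2*π))⁻¹ * rexp (-x^2/2)) * g x := by
  rw [gaussianReal_std_eq']
  rw [integral_withDensity_eq_integral_smul (by fun_prop) g]
  congr 1; ext x
  rw [NNReal.smul_def, Real.coe_toNNReal _ (by positivity), smul_eq_mul]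

lemma integrable_gaussianReal_iff' (g : ℝ → ℝ) :
    Integrable g (gaussianReal 0 1) ↔
      Integrable (fun x => g x * ((√(2*π))⁻¹ * rexp (-x^2/2))) := by
  rw [gaussianReal_std_eq']
  rw [integrable_withDensity_iff (by fun_prop)
    (by filter_upwards with x using ENNReal.coe_lt_top)]
  congr! 1
  ext x
  congr 1
  rw [ENNReal.coe_toReal, Real.coe_toNNReal _ (by positivity)]

lemma integrable_sq_gauss' : Integrable (fun x : ℝ => x^2) (gaussianReal 0 1) := by
  rw [integrable_gaussianReal_iff']
  have h := (integrable_rpow_mul_exp_neg_mul_sq (by norm_num : (0:ℝ) < 1/2)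
    (by norm_num : (-1:ℝ) < 2)).const_mul ((√(2*π))⁻¹)
  refine h.congr ?_
  filter_upwards with x
  rw [Real.rpow_two]
  ring_nf

lemma integrable_abs_gauss' : Integrable (fun x : ℝ => |x|) (gaussianReal 0 1) := by
  rw [integrable_gaussianReal_iff']
  have h := ((integrable_rpow_mul_exp_neg_mul_sq (by norm_num : (0:ℝ) < 1/2)
    (by norm_num : (-1:ℝ) < 1)).const_mul ((√(2*π))⁻¹)).abs
  refine h.congr ?_
  filter_upwards with x
  rw [Real.rpow_one, abs_mul, abs_mul, abs_of_nonneg (by positivity : (0:ℝ) ≤ (√(2*π))⁻¹),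
    abs_of_nonneg (Real.exp_pos _).le]
  ring_nf

lemma integral_sq_gauss' : ∫ x, x^2 ∂(gaussianReal 0 1) = 1 := by
  rw [integral_gaussianReal_std']
  have h1 : ∀ x : ℝ, ((√(2*π))⁻¹ * rexp (-x^2/2)) * x^2
      = (√(2*π))⁻¹ * (|x| ^ (2:ℝ) * rexp (-(1/2) * |x| ^ (2:ℝ))) := by
    intro x
    rw [Real.rpow_two, sq_abs]
    ring_nf
  simp_rw [h1]
  rw [integral_const_mul, integral_comp_abs (f := fun x => x ^ (2:ℝ) * rexp (-(1/2) * x ^ (2:ℝ))),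
    integral_rpow_mul_exp_neg_mul_rpow (by norm_num) (by norm_num) (by norm_num)]
  have hg : Real.Gamma ((2+1)/2) = √π / 2 := by
    have := Real.Gamma_add_one (s := (1/2:ℝ)) (by norm_num)
    rw [Real.Gamma_one_half_eq] at this
    rw [show ((2+1)/2:ℝ) = 1/2 + 1 by norm_num, this]
    ring
  rw [hg]
  have h2 : ((1:ℝ)/2) ^ (-(2+1)/(2:ℝ)) = 2 * √2 := by
    rw [one_div, ← Real.rpow_neg_one (2:ℝ), ← Real.rpow_mul (by norm_num)]
    rw [show (-1 * (-(2+1)/2) : ℝ) = 1 + 2⁻¹ by norm_num, Real.rpow_add (by norm_num),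
      Real.rpow_one, Real.sqrt_eq_rpow]
    norm_num
  rw [h2]
  rw [Real.sqrt_mul (by norm_num) π]
  have h2pos : (0:ℝ) < √2 := by positivity
  have hppos : (0:ℝ) < √π := Real.sqrt_pos.mpr Real.pi_pos
  field_simp

lemma map_eval_pi' (n : ℕ) (i : Fin n) :
    (Measure.pi fun _ : Fin n => gaussianReal 0 1).map (Function.eval i) = gaussianReal 0 1 := by
  classical
  apply Measure.ext; intro s hs
  rw [Measure.map_apply (measurable_pi_apply i) hs, Set.eval_preimage, Measure.pi_pi]
  rw [Finset.prod_eq_single i (fun j _ hj => by rw [Function.update_of_ne hj]; exact measure_univ)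
    (by simp), Function.update_self]

lemma integrable_eval_pi' {n : ℕ} {i : Fin n} {g : ℝ → ℝ} (hg : Continuous g)
    (hint : Integrable g (gaussianReal 0 1)) :
    Integrable (fun x : Fin n → ℝ => g (x i)) (Measure.pi fun _ : Fin n => gaussianReal 0 1) := by
  have h := (integrable_map_measure (f := Function.eval i)
    (μ := Measure.pi fun _ : Fin n => gaussianReal 0 1)
    (by rw [map_eval_pi']; exact hg.aestronglyMeasurable)
    (measurable_pi_apply i).aemeasurable).mp
  exact h (by rw [map_eval_pi']; exact hint)

lemma integral_eval_pi' {n : ℕ} {i : Fin n} {g : ℝ → ℝ} (hg : Continuous g) :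
    ∫ x, g (x i) ∂(Measure.pi fun _ : Fin n => gaussianReal 0 1) = ∫ t, g t ∂(gaussianReal 0 1) := by
  conv_rhs => rw [← map_eval_pi' n i]
  rw [integral_map (measurable_pi_apply i).aemeasurable
    (by rw [map_eval_pi']; exact hg.aestronglyMeasurable)]

end aux

noncomputable def stdGaussian (m : ℕ) : Measure (EuclideanSpace ℝ (Fin m)) :=
  (Measure.pi fun _ : Fin m => gaussianReal 0 1).map
    (MeasurableEquiv.toLp 2 (Fin m → ℝ))

section std

instance (n : ℕ) : IsProbabilityMeasure (stdGaussian n) :=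
  Measure.isProbabilityMeasure_map (MeasurableEquiv.toLp 2 (Fin n → ℝ)).measurable.aemeasurable

lemma norm_equiv_symm' {n : ℕ} (x : Fin n → ℝ) :
    ‖(MeasurableEquiv.toLp 2 (Fin n → ℝ)) x‖ = √(∑ i, x i ^ 2) := by
  rw [MeasurableEquiv.coe_toLp]
  rw [EuclideanSpace.norm_eq]
  congr 1
  refine Finset.sum_congr rfl fun i _ => ?_
  rw [PiLp.toLp_apply, Real.norm_eq_abs, sq_abs]

lemma integrable_norm_stdGaussian' (n : ℕ) : Integrable (fun w => ‖w‖) (stdGaussian n) := by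
  rw [_root_.stdGaussian, integrable_map_equiv]
  have hbound : Integrable (fun x : Fin n → ℝ => ∑ i, |x i|)
      (Measure.pi fun _ : Fin n => gaussianReal 0 1) :=
    integrable_finset_sum _ fun i _ => integrable_eval_pi' continuous_abs integrable_abs_gauss'
  refine hbound.mono' ?_ ?_
  · exact ((MeasurableEquiv.toLp 2 (Fin n → ℝ)).measurable.norm).aestronglyMeasurable
  · filter_upwards with x
    simp only [Function.comp_apply, norm_norm]
    rw [norm_equiv_symm']
    have h1 : ∑ i, x i ^ 2 ≤ (∑ i, |x i|) ^ 2 := by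
      have := Finset.sum_sq_le_sq_sum_of_nonneg (f := fun i => |x i|) (s := Finset.univ)
        (fun i _ => abs_nonneg _)
      simpa [sq_abs] using this
    calc √(∑ i, x i ^ 2) ≤ √((∑ i, |x i|) ^ 2) := Real.sqrt_le_sqrt h1
      _ = ∑ i, |x i| := Real.sqrt_sq (Finset.sum_nonneg fun i _ => abs_nonneg _)

lemma integrable_sq_norm_stdGaussian' (n : ℕ) : Integrable (fun w => ‖w‖^2) (stdGaussian n) := by
  rw [_root_.stdGaussian, integrable_map_equiv]
  have hbound : Integrable (fun x : Fin n → ℝ => ∑ i, x i ^ 2)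
      (Measure.pi fun _ : Fin n => gaussianReal 0 1) :=
    integrable_finset_sum _ fun i _ =>
      integrable_eval_pi' (continuous_pow 2) integrable_sq_gauss'
  refine hbound.congr ?_
  filter_upwards with x
  show ∑ i, x i ^2 = ‖_‖^2
  rw [norm_equiv_symm', Real.sq_sqrt (Finset.sum_nonneg fun i _ => sq_nonneg _)]

lemma integral_sq_norm_stdGaussian' (n : ℕ) : ∫ w, ‖w‖^2 ∂(stdGaussian n) = n := by
  rw [_root_.stdGaussian, integral_map_equiv]
  have h1 : ∀ x : Fin n → ℝ, ‖(MeasurableEquiv.toLp 2 (Fin n → ℝ)) x‖^2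
      = ∑ i, x i ^ 2 := fun x => by
    rw [norm_equiv_symm', Real.sq_sqrt (Finset.sum_nonneg fun i _ => sq_nonneg _)]
  simp_rw [h1]
  rw [integral_finset_sum _ fun i _ =>
      integrable_eval_pi' (continuous_pow 2) integrable_sq_gauss']
  have h2 : ∀ i : Fin n, ∫ x : Fin n → ℝ, x i ^ 2
      ∂(Measure.pi fun _ : Fin n => gaussianReal 0 1) = 1 := fun i => by
    rw [integral_eval_pi' (continuous_pow 2), integral_sq_gauss']
  simp [h2]

lemma integral_norm_stdGaussian_le' (n : ℕ) : ∫ w, ‖w‖ ∂(stdGaussian n) ≤ √n := by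
  set m := ∫ w, ‖w‖ ∂(stdGaussian n) with hm
  have hm0 : 0 ≤ m := integral_nonneg fun w => norm_nonneg _
  have hsq := integrable_sq_norm_stdGaussian' n
  have hno := integrable_norm_stdGaussian' n
  have key : m^2 ≤ n := by
    have h0 : 0 ≤ ∫ w, (‖w‖ - m)^2 ∂(stdGaussian n) := integral_nonneg fun w => sq_nonneg _
    have hrw : ∀ w : EuclideanSpace ℝ (Fin n), (‖w‖ - m)^2 = ‖w‖^2 - (2*m)*‖w‖ + m^2 :=
      fun w => by ring
    rw [show (fun w : EuclideanSpace ℝ (Fin n) => (‖w‖ - m)^2)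
        = fun w => ‖w‖^2 - (2*m)*‖w‖ + m^2 from funext hrw] at h0
    have hsub : Integrable (fun w : EuclideanSpace ℝ (Fin n) => ‖w‖^2 - (2*m)*‖w‖)
        (stdGaussian n) := hsq.sub (hno.const_mul (2*m))
    rw [integral_add hsub (integrable_const _),
      integral_sub hsq (hno.const_mul (2*m)), integral_const_mul,
      integral_const, integral_sq_norm_stdGaussian'] at h0
    simp only [measure_univ, probReal_univ, ENNReal.toReal_one, smul_eq_mul, one_mul, ← hm] at h0
    nlinarith
  have := Real.sqrt_le_sqrt key
  rwa [Real.sqrt_sq hm0] at this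

end std

section calc_part

variable {n : ℕ}

local notation "E" => EuclideanSpace ℝ (Fin n)

lemma smoothed_grad_bound (L : NNReal) (f : EuclideanSpace ℝ (Fin n) → ℝ)
    (hf : ContDiff ℝ 1 f) (hgrad : LipschitzWith L (fun x => gradient f x))
    (σ : ℝ) (hσ : 0 < σ) (x : EuclideanSpace ℝ (Fin n)) :
    ‖gradient (fun y => ∫ w, f (y + σ • w) ∂(stdGaussian n)) x - gradient f x‖
      ≤ (L : ℝ) * σ * Real.sqrt n := by
  classical
  set μ := stdGaussian n
  have hdiff : Differentiable ℝ f := hf.differentiable one_ne_zero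
  have hDcont : Continuous (fderiv ℝ f) := hf.continuous_fderiv one_ne_zero
  have hDlip : ∀ a b : E, ‖fderiv ℝ f a - fderiv ℝ f b‖ ≤ L * ‖a - b‖ := by
    intro a b
    have h := hgrad.dist_le_mul a b
    rw [dist_eq_norm, dist_eq_norm] at h
    have heq : gradient f a - gradient f b
        = (InnerProductSpace.toDual ℝ E).symm (fderiv ℝ f a - fderiv ℝ f b) := by
      simp only [gradient, map_sub]
    rw [heq, LinearIsometryEquiv.norm_map] at h
    exact h
  -- inner differentiability
  have h_inner : ∀ (w : E) (y : E),
      HasFDerivAt (fun y : E => f (y + σ • w)) (fderiv ℝ f (y + σ • w)) y := by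
    intro w y
    have h1 := (hdiff (y + σ • w)).hasFDerivAt
    have h2 : HasFDerivAt (fun y : E => y + σ • w) (ContinuousLinearMap.id ℝ E) y :=
      (hasFDerivAt_id y).add_const _
    have h12 := h1.comp y h2
    simp only [ContinuousLinearMap.comp_id] at h12
    exact h12
  have hcont_shift : ∀ y : E, Continuous (fun w : E => y + σ • w) := fun y =>
    continuous_const.add (continuous_id.const_smul σ)
  -- integrable dominating functions
  have hIntNorm : Integrable (fun w : E => ‖w‖) μ := integrable_norm_stdGaussian' n
  have hIntSq : Integrable (fun w : E => ‖w‖^2) μ := integrable_sq_norm_stdGaussian' n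
  -- pointwise fderiv bound
  have hDbound : ∀ (w y : E), ‖fderiv ℝ f (y + σ • w)‖
      ≤ ‖fderiv ℝ f x‖ + L * ‖y - x‖ + L * σ * ‖w‖ := by
    intro w y
    have h1 : ‖fderiv ℝ f (y + σ • w)‖ ≤ ‖fderiv ℝ f x‖ + ‖fderiv ℝ f (y + σ • w) - fderiv ℝ f x‖ := by
      have := norm_add_le (fderiv ℝ f x) (fderiv ℝ f (y + σ • w) - fderiv ℝ f x)
      simpa using this
    have h2 : ‖fderiv ℝ f (y + σ • w) - fderiv ℝ f x‖ ≤ L * ‖y + σ • w - x‖ := hDlip _ _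
    have h3 : ‖y + σ • w - x‖ ≤ ‖y - x‖ + σ * ‖w‖ := by
      have : y + σ • w - x = (y - x) + σ • w := by abel
      rw [this]
      calc ‖(y - x) + σ • w‖ ≤ ‖y - x‖ + ‖σ • w‖ := norm_add_le _ _
        _ = ‖y - x‖ + σ * ‖w‖ := by rw [norm_smul, Real.norm_eq_abs, abs_of_pos hσ]
    nlinarith [NNReal.coe_nonneg L, norm_nonneg w, mul_le_mul_of_nonneg_left h3 (NNReal.coe_nonneg L)]
  -- the derivative of the smoothed function
  have hF_deriv : HasFDerivAt (fun y => ∫ w, f (y + σ • w) ∂μ)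
      (∫ w, fderiv ℝ f (x + σ • w) ∂μ) x := by
    apply hasFDerivAt_integral_of_dominated_of_fderiv_le
      (F' := fun (y : E) (w : E) => fderiv ℝ f (y + σ • w))
      (bound := fun w : E => ‖fderiv ℝ f x‖ + L + L * σ * ‖w‖) (s := Metric.ball x 1) (Metric.ball_mem_nhds x one_pos)
    · exact Filter.Eventually.of_forall fun y =>
        (hf.continuous.comp (hcont_shift y)).aestronglyMeasurable
    · -- integrability of w ↦ f (x + σ w)
      have hb : Integrable (fun w : E => |f x| + (σ * ‖fderiv ℝ f x‖) * ‖w‖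
          + ((L:ℝ) * σ^2) * ‖w‖^2) μ :=
        ((integrable_const _).add (hIntNorm.const_mul _)).add (hIntSq.const_mul _)
      refine hb.mono' ((hf.continuous.comp (hcont_shift x)).aestronglyMeasurable) ?_
      filter_upwards with w
      have hmv : ‖f (x + σ • w) - f x‖ ≤ (‖fderiv ℝ f x‖ + L * (σ * ‖w‖)) * ‖(x + σ • w) - x‖ := by
        apply Convex.norm_image_sub_le_of_norm_fderiv_le
          (fun z _ => hdiff z) ?_ (convex_closedBall x (σ * ‖w‖))
          (Metric.mem_closedBall_self (by positivity))
          (by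
            rw [Metric.mem_closedBall, dist_eq_norm]
            have : x + σ • w - x = σ • w := by abel
            rw [this, norm_smul, Real.norm_eq_abs, abs_of_pos hσ])
        · intro z hz
          rw [Metric.mem_closedBall, dist_eq_norm] at hz
          have h1 : ‖fderiv ℝ f z‖ ≤ ‖fderiv ℝ f x‖ + ‖fderiv ℝ f z - fderiv ℝ f x‖ := by
            have := norm_add_le (fderiv ℝ f x) (fderiv ℝ f z - fderiv ℝ f x)
            simpa using this
          have h2 : ‖fderiv ℝ f z - fderiv ℝ f x‖ ≤ L * ‖z - x‖ := hDlip _ _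
          have h3 : (L:ℝ) * ‖z - x‖ ≤ L * (σ * ‖w‖) :=
            mul_le_mul_of_nonneg_left hz (NNReal.coe_nonneg L)
          linarith
      have hsw : ‖(x + σ • w) - x‖ = σ * ‖w‖ := by
        have : x + σ • w - x = σ • w := by abel
        rw [this, norm_smul, Real.norm_eq_abs, abs_of_pos hσ]
      rw [hsw] at hmv
      have : ‖f (x + σ • w)‖ ≤ ‖f x‖ + ‖f (x + σ • w) - f x‖ := by
        have := norm_add_le (f x) (f (x + σ • w) - f x)
        simpa using this
      rw [Real.norm_eq_abs, Real.norm_eq_abs] at this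
      calc ‖f (x + σ • w)‖ = |f (x + σ • w)| := rfl
        _ ≤ |f x| + ‖f (x + σ • w) - f x‖ := this
        _ ≤ |f x| + (‖fderiv ℝ f x‖ + L * (σ * ‖w‖)) * (σ * ‖w‖) := by linarith
        _ = |f x| + (σ * ‖fderiv ℝ f x‖) * ‖w‖ + ((L:ℝ) * σ^2) * ‖w‖^2 := by ring
    · exact (hDcont.comp (hcont_shift x)).aestronglyMeasurable
    · filter_upwards with w
      intro y hy
      rw [Metric.mem_ball, dist_eq_norm] at hy
      have := hDbound w y
      have h4 : (L:ℝ) * ‖y - x‖ ≤ L * 1 :=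
        mul_le_mul_of_nonneg_left hy.le (NNReal.coe_nonneg L)
      calc ‖fderiv ℝ f (y + σ • w)‖ ≤ ‖fderiv ℝ f x‖ + L * ‖y - x‖ + L * σ * ‖w‖ := this
        _ ≤ ‖fderiv ℝ f x‖ + L + L * σ * ‖w‖ := by linarith
    · have hbint : Integrable (fun w : E => (‖fderiv ℝ f x‖ + (L:ℝ)) + ((L:ℝ)*σ)*‖w‖) μ :=
        (integrable_const _).add (hIntNorm.const_mul _)
      exact hbint.congr (by filter_upwards with w; ring)
    · filter_upwards with w
      intro y _
      exact h_inner w y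
  -- identify the gradient
  have hgradF : gradient (fun y => ∫ w, f (y + σ • w) ∂μ) x
      = (InnerProductSpace.toDual ℝ E).symm (∫ w, fderiv ℝ f (x + σ • w) ∂μ) := by
    rw [gradient, hF_deriv.fderiv]
  have hgradf : gradient f x = (InnerProductSpace.toDual ℝ E).symm (fderiv ℝ f x) := rfl
  rw [hgradF, hgradf, ← map_sub, LinearIsometryEquiv.norm_map]
  -- integrability of the fderiv integrand
  have hDint : Integrable (fun w : E => fderiv ℝ f (x + σ • w)) μ := by
    have hb : Integrable (fun w : E => ‖fderiv ℝ f x‖ + ((L:ℝ) * σ) * ‖w‖) μ :=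
      (integrable_const _).add (hIntNorm.const_mul _)
    refine hb.mono' (hDcont.comp (hcont_shift x)).aestronglyMeasurable ?_
    filter_upwards with w
    have := hDbound w x
    simp only [sub_self, norm_zero, mul_zero, add_zero] at this
    calc ‖fderiv ℝ f (x + σ • w)‖ ≤ ‖fderiv ℝ f x‖ + L * ‖x - x‖ + L * σ * ‖w‖ := hDbound w x
      _ = ‖fderiv ℝ f x‖ + ((L:ℝ) * σ) * ‖w‖ := by simp [mul_assoc]
  have hconst : ∫ _ : E, fderiv ℝ f x ∂μ = fderiv ℝ f x := by
    rw [integral_const]; simp [measure_univ]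
  rw [← hconst, ← integral_sub hDint (integrable_const _)]
  calc ‖∫ w, (fderiv ℝ f (x + σ • w) - fderiv ℝ f x) ∂μ‖
      ≤ ∫ w, ‖fderiv ℝ f (x + σ • w) - fderiv ℝ f x‖ ∂μ := norm_integral_le_integral_norm _
    _ ≤ ∫ w, ((L:ℝ) * σ) * ‖w‖ ∂μ := by
        apply integral_mono (hDint.sub (integrable_const _)).norm (hIntNorm.const_mul _)
        intro w
        calc ‖fderiv ℝ f (x + σ • w) - fderiv ℝ f x‖ ≤ L * ‖x + σ • w - x‖ := hDlip _ _
          _ = ((L:ℝ) * σ) * ‖w‖ := by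
              have : x + σ • w - x = σ • w := by abel
              rw [this, norm_smul, Real.norm_eq_abs, abs_of_pos hσ, mul_assoc]
    _ = ((L:ℝ) * σ) * ∫ w, ‖w‖ ∂μ := integral_const_mul _ _
    _ ≤ ((L:ℝ) * σ) * √n := by
        apply mul_le_mul_of_nonneg_left (integral_norm_stdGaussian_le' n)
        positivity

end calc_part

/-- The gradient of the Gaussian smoothing converges to the true gradient as σ → 0,
with quantitative bound ‖∇f_σ(x) − ∇f(x)‖ ≤ Lσ√n. -/
theorem gradient_smoothing_convergence (n : ℕ) (L : NNReal)
    (f : EuclideanSpace ℝ (Fin n) → ℝ)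
    (hf : ContDiff ℝ 1 f) (hgrad : LipschitzWith L (fun x => gradient f x)) :
    (∀ σ : ℝ, 0 < σ → ∀ x : EuclideanSpace ℝ (Fin n),
      ‖gradient (fun y => ∫ w, f (y + σ • w) ∂(stdGaussian n)) x - gradient f x‖
        ≤ (L : ℝ) * σ * Real.sqrt n) ∧
    (∀ x : EuclideanSpace ℝ (Fin n), Filter.Tendsto
      (fun σ : ℝ => gradient (fun y => ∫ w, f (y + σ • w) ∂(stdGaussian n)) x)
      (nhdsWithin 0 (Set.Ioi 0)) (nhds (gradient f x))) := by
  have part1 := smoothed_grad_bound L f hf hgrad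
  refine ⟨fun σ hσ x => part1 σ hσ x, fun x => ?_⟩
  rw [tendsto_iff_norm_sub_tendsto_zero]
  apply squeeze_zero' (Filter.Eventually.of_forall fun σ => norm_nonneg _)
    (g := fun σ : ℝ => (L : ℝ) * σ * √n)
  · filter_upwards [self_mem_nhdsWithin] with σ hσ
    exact part1 σ hσ x
  · have hcont : Continuous (fun σ : ℝ => (L : ℝ) * σ * √(n:ℝ)) := by fun_prop
    have hc := hcont.tendsto 0
    simp only [mul_zero, zero_mul] at hc
    exact hc.mono_left nhdsWithin_le_nhds
end

section
/- In a finite-state MDP with deterministic policy π and discount γ ∈ [0,1), if the value function V satisfies the Bellman evaluation equation for the smoothed MDP, V_σ^π(s) = R_σ(s, π(s)) + γ Σ_{s'} V_σ^π(s') P_σ(s'|s, π(s)), where R_σ and P_σ are the Gaussian-smoothed reward and kernel, then V_σ^π coincides with E_{w∼N(0,I)}[Q_σ^π(s, π(s)+σw)], where Q_σ^π is the fixed point of the σ-smoothed Bellman operator. -/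
open MeasureTheory ProbabilityTheory

instance stdGaussian_prob (m : ℕ) : IsProbabilityMeasure (stdGaussian m) := by
  unfold _root_.stdGaussian
  exact Measure.isProbabilityMeasure_map (MeasurableEquiv.measurable _).aemeasurable

lemma integrable_of_bdd {m : ℕ} {f : EuclideanSpace ℝ (Fin m) → ℝ} (hf : Measurable f)
    {C : ℝ} (hC : ∀ x, |f x| ≤ C) : Integrable f (stdGaussian m) :=
  (integrable_const C).mono' hf.aestronglyMeasurable (Filter.Eventually.of_forall hC)

/-- The value function of the smoothed MDP coincides with the Gaussian average of the
fixed point of the σ-smoothed Bellman operator along the policy. -/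
theorem smoothed_value_consistency {S : Type*} [Fintype S] (m : ℕ) (γ σ Rmax : ℝ)
    (hγ0 : 0 ≤ γ) (hγ1 : γ < 1) (hσ : 0 < σ)
    (R : S → EuclideanSpace ℝ (Fin m) → ℝ) (hRm : ∀ s, Measurable (R s))
    (hRb : ∀ s a, |R s a| ≤ Rmax)
    (P : S → EuclideanSpace ℝ (Fin m) → S → ℝ)
    (hPm : ∀ s s', Measurable (fun a => P s a s'))
    (hP0 : ∀ s a s', 0 ≤ P s a s') (hP1 : ∀ s a, ∑ s', P s a s' = 1)
    (π : S → EuclideanSpace ℝ (Fin m))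
    (Qσ : S → EuclideanSpace ℝ (Fin m) → ℝ) (hQσm : ∀ s, Measurable (Qσ s))
    (hQσb : ∃ C, ∀ s a, |Qσ s a| ≤ C)
    (hQσfix : ∀ s a, Qσ s a
      = R s a + γ * ∑ s', P s a s' * ∫ w, Qσ s' (π s' + σ • w) ∂(stdGaussian m))
    (V : S → ℝ)
    (hV : ∀ s, V s = (∫ w, R s (π s + σ • w) ∂(stdGaussian m))
        + γ * ∑ s', (∫ w, P s (π s + σ • w) s' ∂(stdGaussian m)) * V s') :
    ∀ s, V s = ∫ w, Qσ s (π s + σ • w) ∂(stdGaussian m) := by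
  obtain ⟨C, hC⟩ := hQσb
  set μ := stdGaussian m with hμ
  have haff : ∀ s : S, Measurable (fun w : EuclideanSpace ℝ (Fin m) => π s + σ • w) :=
    fun s => (continuous_const.add (continuous_const_smul σ)).measurable
  have hP_le_one : ∀ s a s', P s a s' ≤ 1 := by
    intro s a s'
    calc P s a s' ≤ ∑ t, P s a t := Finset.single_le_sum (fun t _ => hP0 s a t) (Finset.mem_univ s')
    _ = 1 := hP1 s a
  set W : S → ℝ := fun s => ∫ w, Qσ s (π s + σ • w) ∂μ with hWdef
  set Pb : S → S → ℝ := fun s s' => ∫ w, P s (π s + σ • w) s' ∂μ with hPbdef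
  -- integrability facts
  have hintQ : ∀ s s' : S, Integrable (fun w => Qσ s' (π s + σ • w)) μ := fun s s' =>
    integrable_of_bdd ((hQσm s').comp (haff s)) (fun w => hC s' _)
  have hintR : ∀ s : S, Integrable (fun w => R s (π s + σ • w)) μ := fun s =>
    integrable_of_bdd ((hRm s).comp (haff s)) (fun w => hRb s _)
  have hintP : ∀ s s' : S, Integrable (fun w => P s (π s + σ • w) s') μ := fun s s' =>
    integrable_of_bdd ((hPm s s').comp (haff s))
      (fun w => by rw [abs_of_nonneg (hP0 s _ s')]; exact hP_le_one s _ s')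
  -- W satisfies the same Bellman equation
  have hW : ∀ s, W s = (∫ w, R s (π s + σ • w) ∂μ) + γ * ∑ s', Pb s s' * W s' := by
    intro s
    have h1 : W s = ∫ w, (R s (π s + σ • w)
        + γ * ∑ s', P s (π s + σ • w) s' * W s') ∂μ := by
      apply integral_congr_ae
      filter_upwards with w
      rw [hQσfix s (π s + σ • w)]
    rw [h1]
    have hintSum : Integrable (fun w => ∑ s', P s (π s + σ • w) s' * W s') μ := by
      apply integrable_finset_sum
      intro s' _
      exact (hintP s s').mul_const _
    rw [integral_add (hintR s) (hintSum.const_mul γ), integral_const_mul,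
      integral_finset_sum]
    · congr 1
      congr 1
      apply Finset.sum_congr rfl
      intro s' _
      rw [integral_mul_const]
    · intro s' _
      exact (hintP s s').mul_const _
  -- properties of Pb
  have hPb0 : ∀ s s', 0 ≤ Pb s s' := fun s s' =>
    integral_nonneg (fun w => hP0 s _ s')
  have hPb1 : ∀ s, ∑ s', Pb s s' = 1 := by
    intro s
    have : ∑ s', Pb s s' = ∫ w, (∑ s', P s (π s + σ • w) s') ∂μ := by
      rw [integral_finset_sum]
      intro s' _
      exact hintP s s'
    rw [this]
    simp only [hP1]
    simp [measure_univ]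
  -- contraction argument on D = V - W
  intro s₀
  set D : S → ℝ := fun s => V s - W s with hDdef
  have hDeq : ∀ s, D s = γ * ∑ s', Pb s s' * D s' := by
    intro s
    have : D s = γ * ∑ s', Pb s s' * V s' - γ * ∑ s', Pb s s' * W s' := by
      simp only [hDdef]
      rw [hV s, hW s]
      ring
    rw [this, ← mul_sub, ← Finset.sum_sub_distrib]
    congr 1
    apply Finset.sum_congr rfl
    intro s' _
    simp only [hDdef]
    ring
  have hne : (Finset.univ : Finset S).Nonempty := ⟨s₀, Finset.mem_univ s₀⟩
  set M := Finset.univ.sup' hne (fun s => |D s|) with hM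
  have hM0 : 0 ≤ M := le_trans (abs_nonneg (D s₀)) (Finset.le_sup' (fun s => |D s|) (Finset.mem_univ s₀))
  have hkey : ∀ s, |D s| ≤ γ * M := by
    intro s
    rw [hDeq s, abs_mul, abs_of_nonneg hγ0]
    apply mul_le_mul_of_nonneg_left _ hγ0
    calc |∑ s', Pb s s' * D s'| ≤ ∑ s', |Pb s s' * D s'| := Finset.abs_sum_le_sum_abs _ _
      _ ≤ ∑ s', Pb s s' * M := by
          apply Finset.sum_le_sum
          intro s' _
          rw [abs_mul, abs_of_nonneg (hPb0 s s')]
          exact mul_le_mul_of_nonneg_left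
            (Finset.le_sup' (fun s => |D s|) (Finset.mem_univ s')) (hPb0 s s')
      _ = M := by rw [← Finset.sum_mul, hPb1 s, one_mul]
  have hMle : M ≤ γ * M := Finset.sup'_le _ _ (fun s _ => hkey s)
  have hMz : M = 0 := by nlinarith
  have : |D s₀| ≤ 0 := hMz ▸ Finset.le_sup' (fun s => |D s|) (Finset.mem_univ s₀)
  have := abs_nonneg (D s₀)
  have hD0 : D s₀ = 0 := abs_eq_zero.mp (le_antisymm ‹|D s₀| ≤ 0› this)
  have := sub_eq_zero.mp hD0
  simpa [hWdef] using this
end
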